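/- Every countably complete uniform ultrafilter U on a regular uncountable cardinal κ is Rudin–Blass above an ultrafilter extending the club filter: there exists f : κ → κ almost one-to-one modulo U such that the pushforward f_*(U) extends Cub_κ. -/

import Mathlib

open Cardinal Set

namespace PaperFormal

/-- `A` is unbounded in `κ` (as a set of ordinals below `κ`). -/
def UnboundedIn (κ : Ordinal.{0}) (A : Set Ordinal) : Prop :=
  ∀ α < κ, ∃ β ∈ A, α ≤ β

/-- `A ⊆* B`: almost inclusion (mod bounded) below `κ`. -/
def AlmostSub (κ : Ordinal.{0}) (A B : Set Ordinal) : Prop :=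
  ∃ α < κ, ∀ β ∈ A, α ≤ β → β ∈ B

/-- `C` is closed in `κ`. -/
def ClosedIn (κ : Ordinal.{0}) (C : Set Ordinal) : Prop :=
  ∀ α, α < κ → α ≠ 0 → (∀ β < α, (C ∩ Set.Ioo β α).Nonempty) → α ∈ C

/-- `C` is a club (closed unbounded set) in `κ`. -/
def IsClub (κ : Ordinal.{0}) (C : Set Ordinal) : Prop :=
  C ⊆ Set.Iio κ ∧ UnboundedIn κ C ∧ ClosedIn κ C

/-- `f` maps `κ` into `κ`. -/
def FunOn (κ : Ordinal.{0}) (f : Ordinal → Ordinal) : Prop :=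
  ∀ β < κ, f β < κ

/-- almost everywhere domination `f ≤* g` on `κ`. -/
def LeStar (κ : Ordinal.{0}) (f g : Ordinal → Ordinal) : Prop :=
  ∃ α < κ, ∀ β, α ≤ β → β < κ → f β ≤ g β

def UnboundedFunFam (κ : Ordinal.{0}) (𝒜 : Set (Ordinal → Ordinal)) : Prop :=
  (∀ f ∈ 𝒜, FunOn κ f) ∧ ∀ g, FunOn κ g → ∃ f ∈ 𝒜, ¬ LeStar κ f g

def DominatingFunFam (κ : Ordinal.{0}) (𝒜 : Set (Ordinal → Ordinal)) : Prop :=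
  (∀ f ∈ 𝒜, FunOn κ f) ∧ ∀ g, FunOn κ g → ∃ f ∈ 𝒜, LeStar κ g f

/-- the generalized bounding number `𝔟_κ`. -/
noncomputable def bNum (κ : Ordinal.{0}) : Cardinal :=
  sInf { μ : Cardinal.{0} | ∃ 𝒜, UnboundedFunFam κ 𝒜 ∧ #𝒜 = Cardinal.lift.{1} μ }

/-- the generalized dominating number `𝔡_κ`. -/
noncomputable def dNum (κ : Ordinal.{0}) : Cardinal :=
  sInf { μ : Cardinal.{0} | ∃ 𝒜, DominatingFunFam κ 𝒜 ∧ #𝒜 = Cardinal.lift.{1} μ }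

/-- a (proper) filter on `κ`. -/
structure IsKFilter (κ : Ordinal.{0}) (F : Set (Set Ordinal)) : Prop where
  subset : ∀ A ∈ F, A ⊆ Set.Iio κ
  univ_mem : Set.Iio κ ∈ F
  upward : ∀ A ∈ F, ∀ B, B ⊆ Set.Iio κ → A ⊆ B → B ∈ F
  inter : ∀ A ∈ F, ∀ B ∈ F, A ∩ B ∈ F
  proper : ∅ ∉ F

/-- an ultrafilter on `κ`. -/
structure IsKUltrafilter (κ : Ordinal.{0}) (U : Set (Set Ordinal)) extends IsKFilter κ U : Prop where
  decide : ∀ A, A ⊆ Set.Iio κ → A ∈ U ∨ (Set.Iio κ \ A) ∈ U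

/-- uniformity: every member is unbounded (equivalently, for regular `κ`, of size `κ`). -/
def Uniform (κ : Ordinal.{0}) (F : Set (Set Ordinal)) : Prop :=
  ∀ A ∈ F, UnboundedIn κ A

/-- `κ`-completeness. -/
def KComplete (κ : Ordinal.{0}) (F : Set (Set Ordinal)) : Prop :=
  ∀ s : Set (Set Ordinal), s ⊆ F → s.Nonempty → #s < Cardinal.lift.{1} κ.card → ⋂₀ s ∈ F

/-- closure under diagonal intersections. -/
def DiagClosed (κ : Ordinal.{0}) (F : Set (Set Ordinal)) : Prop :=
  ∀ A : Ordinal → Set Ordinal, (∀ i < κ, A i ∈ F) →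
    {β | β < κ ∧ ∀ i < β, β ∈ A i} ∈ F

/-- a normal ultrafilter on `κ`: `κ`-complete, contains all clubs, closed under
diagonal intersections. -/
def NormalUF (κ : Ordinal.{0}) (U : Set (Set Ordinal)) : Prop :=
  IsKUltrafilter κ U ∧ Uniform κ U ∧ KComplete κ U ∧
    (∀ C, IsClub κ C → C ∈ U) ∧ DiagClosed κ U

/-- `ℬ` is a `⊆*`-base for `F`. -/
def IsBase (κ : Ordinal.{0}) (F ℬ : Set (Set Ordinal)) : Prop :=
  ℬ ⊆ F ∧ ∀ A ∈ F, ∃ B ∈ ℬ, AlmostSub κ B A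

/-- the character of a filter. -/
noncomputable def chNum (κ : Ordinal.{0}) (F : Set (Set Ordinal)) : Cardinal :=
  sInf { μ : Cardinal.{0} | ∃ ℬ, IsBase κ F ℬ ∧ #ℬ = Cardinal.lift.{1} μ }

/-- there is a `⊆*`-decreasing `λ`-sequence in `F` with no `⊆*`-lower bound in `F`. -/
def HasTower (κ : Ordinal.{0}) (F : Set (Set Ordinal)) (lam : Cardinal) : Prop :=
  ∃ S : Ordinal → Set Ordinal, (∀ i < lam.ord, S i ∈ F) ∧
    (∀ i j, i < j → j < lam.ord → AlmostSub κ (S j) (S i)) ∧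
    ¬ ∃ Y ∈ F, ∀ i < lam.ord, AlmostSub κ Y (S i)

/-- the depth `𝔱(F)` of a filter. -/
noncomputable def tNum (κ : Ordinal.{0}) (F : Set (Set Ordinal)) : Cardinal :=
  sInf { μ : Cardinal.{0} | μ.IsRegular ∧ HasTower κ F μ }

/-- the ultrafilter number `𝔲_κ`. -/
noncomputable def uNum (κ : Ordinal.{0}) : Cardinal :=
  sInf { μ : Cardinal.{0} | ∃ U, IsKUltrafilter κ U ∧ Uniform κ U ∧ chNum κ U = μ }

/-- the complete ultrafilter number `𝔲^com_κ`. -/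
noncomputable def uComNum (κ : Ordinal.{0}) : Cardinal :=
  sInf { μ : Cardinal.{0} | ∃ U, IsKUltrafilter κ U ∧ Uniform κ U ∧ KComplete κ U ∧ chNum κ U = μ }

/-- `U` is a simple `P_λ`-point: a uniform ultrafilter with a `⊆*`-decreasing
generating sequence of length `λ`. -/
def SimplePPoint (κ : Ordinal.{0}) (lam : Cardinal) (U : Set (Set Ordinal)) : Prop :=
  IsKUltrafilter κ U ∧ Uniform κ U ∧
    ∃ S : Ordinal → Set Ordinal, (∀ i < lam.ord, S i ∈ U) ∧
      (∀ i j, i < j → j < lam.ord → AlmostSub κ (S j) (S i)) ∧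
      ∀ A ∈ U, ∃ i < lam.ord, AlmostSub κ (S i) A

/-- a `⊆*`-decreasing generating sequence of length `λ` for a filter `F`. -/
def SimplePFilter (κ : Ordinal.{0}) (lam : Cardinal) (F : Set (Set Ordinal)) : Prop :=
  ∃ S : Ordinal → Set Ordinal, (∀ i < lam.ord, S i ∈ F) ∧
    (∀ i j, i < j → j < lam.ord → AlmostSub κ (S j) (S i)) ∧
    ∀ A ∈ F, ∃ i < lam.ord, AlmostSub κ (S i) A

/-- `ℬ` is a `π`-base for `U`: unbounded sets, almost contained in members of `U`. -/
def IsPiBase (κ : Ordinal.{0}) (U ℬ : Set (Set Ordinal)) : Prop :=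
  (∀ B ∈ ℬ, B ⊆ Set.Iio κ ∧ UnboundedIn κ B) ∧ ∀ A ∈ U, ∃ B ∈ ℬ, AlmostSub κ B A

/-- the `π`-character `πch(U)`. -/
noncomputable def piChNum (κ : Ordinal.{0}) (U : Set (Set Ordinal)) : Cardinal :=
  sInf { μ : Cardinal.{0} | ∃ ℬ, IsPiBase κ U ℬ ∧ #ℬ = Cardinal.lift.{1} μ }

/-- `Y` is a pseudo-intersection of the family `𝒜`. -/
def IsPseudoInter (κ : Ordinal.{0}) (𝒜 : Set (Set Ordinal)) (Y : Set Ordinal) : Prop :=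
  Y ⊆ Set.Iio κ ∧ UnboundedIn κ Y ∧ ∀ A ∈ 𝒜, AlmostSub κ Y A

/-- `π𝔭(U)`: the least size of a subfamily of `U` with no pseudo-intersection. -/
noncomputable def piPNum (κ : Ordinal.{0}) (U : Set (Set Ordinal)) : Cardinal :=
  sInf { μ : Cardinal.{0} | ∃ 𝒜, 𝒜 ⊆ U ∧ #𝒜 = Cardinal.lift.{1} μ ∧ ¬ ∃ Y, IsPseudoInter κ 𝒜 Y }

/-- a `⊆*`-decreasing `λ`-sequence in `U` unbounded in `([κ]^κ, ⊇*)`. -/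
def HasPiTower (κ : Ordinal.{0}) (U : Set (Set Ordinal)) (lam : Cardinal) : Prop :=
  ∃ S : Ordinal → Set Ordinal, (∀ i < lam.ord, S i ∈ U) ∧
    (∀ i j, i < j → j < lam.ord → AlmostSub κ (S j) (S i)) ∧
    ¬ ∃ Y, Y ⊆ Set.Iio κ ∧ UnboundedIn κ Y ∧ ∀ i < lam.ord, AlmostSub κ Y (S i)

/-- `π𝔱(U)`. -/
noncomputable def piTNum (κ : Ordinal.{0}) (U : Set (Set Ordinal)) : Cardinal :=
  sInf { μ : Cardinal.{0} | μ.IsRegular ∧ HasPiTower κ U μ }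

/-- `A` splits `B`. -/
def Splits (κ : Ordinal.{0}) (A B : Set Ordinal) : Prop :=
  UnboundedIn κ (B ∩ A) ∧ UnboundedIn κ (B \ A)

/-- the splitting number `𝔰_κ`. -/
noncomputable def sNum (κ : Ordinal.{0}) : Cardinal :=
  sInf { μ : Cardinal.{0} | ∃ 𝒜 : Set (Set Ordinal), (∀ A ∈ 𝒜, A ⊆ Set.Iio κ) ∧
    (∀ X, X ⊆ Set.Iio κ → UnboundedIn κ X → ∃ A ∈ 𝒜, Splits κ A X) ∧ #𝒜 = Cardinal.lift.{1} μ }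

/-- the reaping number `𝔯_κ`. -/
noncomputable def rNum (κ : Ordinal.{0}) : Cardinal :=
  sInf { μ : Cardinal.{0} | ∃ 𝒜 : Set (Set Ordinal), (∀ A ∈ 𝒜, A ⊆ Set.Iio κ ∧ UnboundedIn κ A) ∧
    (¬ ∃ X, X ⊆ Set.Iio κ ∧ ∀ A ∈ 𝒜, Splits κ X A) ∧ #𝒜 = Cardinal.lift.{1} μ }

/-- `f` is almost one-to-one modulo `U`: bounded-to-one on a set in `U`. -/
def AlmostInjMod (κ : Ordinal.{0}) (U : Set (Set Ordinal)) (f : Ordinal → Ordinal) : Prop :=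
  ∃ X ∈ U, ∀ γ < κ, ∃ α < κ, ∀ β ∈ X, f β = γ → β < α

/-- the pushforward `f_*(U)`. -/
def PushFwd (κ : Ordinal.{0}) (f : Ordinal → Ordinal) (U : Set (Set Ordinal)) :
    Set (Set Ordinal) :=
  { A | A ⊆ Set.Iio κ ∧ (Set.Iio κ ∩ f ⁻¹' A) ∈ U }

/-- countable completeness. -/
def CountablyComplete (U : Set (Set Ordinal)) : Prop :=
  ∀ s : Set (Set Ordinal), s ⊆ U → s.Countable → s.Nonempty → ⋂₀ s ∈ U


/-- A "good" function: maps `κ` into `κ`, monotone below `κ`, tends to `κ`. -/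
def Good (κo : Ordinal.{0}) (f : Ordinal → Ordinal) : Prop :=
  (∀ β < κo, f β < κo) ∧ (∀ β γ, β ≤ γ → γ < κo → f β ≤ f γ) ∧
  (∀ α < κo, ∃ β0 < κo, ∀ β, β0 ≤ β → β < κo → α ≤ f β)

lemma good_id (κo : Ordinal.{0}) : Good κo id :=
  ⟨fun _ h => h, fun _ _ h _ => h, fun α hα => ⟨α, hα, fun _ h1 _ => h1⟩⟩

lemma tail_mem (κo : Ordinal.{0}) (U : Set (Set Ordinal))
    (hU : IsKUltrafilter κo U) (huni : Uniform κo U) {β1 : Ordinal} (h : β1 < κo) :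
    Set.Iio κo \ Set.Iio β1 ∈ U := by
  rcases hU.decide (Set.Iio β1) (fun b hb => lt_trans hb h) with hmem | h2
  · obtain ⟨β, hβ, hle⟩ := huni _ hmem β1 h
    exact absurd hle (not_le.2 hβ)
  · exact h2

lemma good_almostInj (κ : Cardinal.{0}) (hreg : κ.IsRegular)
    (U : Set (Set Ordinal)) (hU : IsKUltrafilter κ.ord U)
    {f : Ordinal → Ordinal} (hf : Good κ.ord f) : AlmostInjMod κ.ord U f := by
  have hlim : Order.IsSuccLimit κ.ord := Cardinal.isSuccLimit_ord hreg.aleph0_le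
  refine ⟨Set.Iio κ.ord, hU.toIsKFilter.univ_mem, fun γ hγ => ?_⟩
  have hsucc : γ + 1 < κ.ord := by
    rw [Ordinal.add_one_eq_succ]; exact hlim.succ_lt hγ
  obtain ⟨β0, hβ0, h⟩ := hf.2.2 (γ + 1) hsucc
  refine ⟨β0, hβ0, fun β hβ hfβ => ?_⟩
  by_contra hge
  push_neg at hge
  have h2 : γ + 1 ≤ γ := hfβ ▸ h β hge hβ
  have h3 : γ < γ + 1 := by rw [Ordinal.add_one_eq_succ]; exact Order.lt_succ γ
  exact absurd (h3.trans_le h2) (lt_irrefl γ)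

lemma good_step (κ : Cardinal.{0}) (hreg : κ.IsRegular)
    (U : Set (Set Ordinal)) (hU : IsKUltrafilter κ.ord U) (huni : Uniform κ.ord U)
    {f : Ordinal → Ordinal} (hf : Good κ.ord f) {C : Set Ordinal} (hC : IsClub κ.ord C)
    (hnot : (Set.Iio κ.ord ∩ f ⁻¹' C) ∉ U) :
    ∃ g, Good κ.ord g ∧ (Set.Iio κ.ord ∩ {β | g β < f β}) ∈ U := by
  have hlim : Order.IsSuccLimit κ.ord := Cardinal.isSuccLimit_ord hreg.aleph0_le
  have hsucc : ∀ c < κ.ord, c + 1 < κ.ord := fun c hc => by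
    rw [Ordinal.add_one_eq_succ]; exact hlim.succ_lt hc
  have hlt1 : ∀ c : Ordinal, c < c + 1 := fun c => by
    rw [Ordinal.add_one_eq_succ]; exact Order.lt_succ c
  refine ⟨fun β => sSup (C ∩ Set.Iio (f β)), ?_, ?_⟩
  case _ =>
    have hbdd : ∀ x : Ordinal, BddAbove (C ∩ Set.Iio x) := fun x => ⟨x, fun c hc => hc.2.le⟩
    refine ⟨?_, ?_, ?_⟩
    · intro β hβ
      show sSup (C ∩ Set.Iio (f β)) < κ.ord
      by_cases hne : (C ∩ Set.Iio (f β)).Nonempty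
      · exact lt_of_le_of_lt (csSup_le hne fun c hc => hc.2.le) (hf.1 β hβ)
      · rw [Set.not_nonempty_iff_eq_empty.1 hne, csSup_empty]
        exact lt_of_le_of_lt bot_le (hf.1 β hβ)
    · intro β γ hβγ hγ
      show sSup (C ∩ Set.Iio (f β)) ≤ sSup (C ∩ Set.Iio (f γ))
      by_cases hne : (C ∩ Set.Iio (f β)).Nonempty
      · exact csSup_le_csSup (hbdd _) hne
          (fun c hc => ⟨hc.1, lt_of_lt_of_le hc.2 (hf.2.1 β γ hβγ hγ)⟩)
      · rw [Set.not_nonempty_iff_eq_empty.1 hne, csSup_empty]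
        exact bot_le
    · intro α hα
      obtain ⟨c, hcC, hαc⟩ := hC.2.1 α hα
      have hc : c < κ.ord := hC.1 hcC
      obtain ⟨β0, hβ0, h⟩ := hf.2.2 (c + 1) (hsucc c hc)
      refine ⟨β0, hβ0, fun β h1 h2 => ?_⟩
      have hfc : c < f β := (hlt1 c).trans_le (h β h1 h2)
      exact le_trans hαc (le_csSup (hbdd _) ⟨hcC, hfc⟩)

  case _ =>
    have hbdd : ∀ x : Ordinal, BddAbove (C ∩ Set.Iio x) := fun x => ⟨x, fun c hc => hc.2.le⟩
    have hgle : ∀ β, sSup (C ∩ Set.Iio (f β)) ≤ f β := by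
      intro β
      by_cases hne : (C ∩ Set.Iio (f β)).Nonempty
      · exact csSup_le hne fun c hc => hc.2.le
      · rw [Set.not_nonempty_iff_eq_empty.1 hne, csSup_empty]
        exact bot_le
    -- the sup belongs to `C` when the set is nonempty (uses closedness)
    have hmemC : ∀ β, f β < κ.ord → (C ∩ Set.Iio (f β)).Nonempty →
        sSup (C ∩ Set.Iio (f β)) ∈ C := by
      intro β hfβ hne
      by_cases hmem : sSup (C ∩ Set.Iio (f β)) ∈ C ∩ Set.Iio (f β)
      · exact hmem.1
      · have hslt : sSup (C ∩ Set.Iio (f β)) < κ.ord := lt_of_le_of_lt (hgle β) hfβ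
        have hs0 : sSup (C ∩ Set.Iio (f β)) ≠ 0 := by
          obtain ⟨c, hc⟩ := hne
          have hcs : c ≤ sSup (C ∩ Set.Iio (f β)) := le_csSup (hbdd _) hc
          intro h0
          apply hmem
          have hc0 : c = 0 := le_antisymm (h0 ▸ hcs) (zero_le (a := c))
          rw [h0, ← hc0]; exact hc
        apply hC.2.2 _ hslt hs0
        intro δ hδ
        obtain ⟨c, hc, hδc⟩ := exists_lt_of_lt_csSup hne hδ
        have hcs : c ≤ sSup (C ∩ Set.Iio (f β)) := le_csSup (hbdd _) hc
        have hcne : c ≠ sSup (C ∩ Set.Iio (f β)) := fun h => hmem (h ▸ hc)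
        exact ⟨c, hc.1, hδc, lt_of_le_of_ne hcs hcne⟩
    -- membership in U of the set where g < f
    obtain ⟨c0, hc0C, _⟩ := hC.2.1 0 hlim.pos
    have hc0 : c0 < κ.ord := hC.1 hc0C
    obtain ⟨β1, hβ1, h1⟩ := hf.2.2 (c0 + 1) (hsucc c0 hc0)
    have hD1 : Set.Iio κ.ord \ (Set.Iio κ.ord ∩ f ⁻¹' C) ∈ U := by
      rcases hU.decide _ Set.inter_subset_left with h | h
      · exact absurd h hnot
      · exact h
    have hD2 : Set.Iio κ.ord \ Set.Iio β1 ∈ U := tail_mem κ.ord U hU huni hβ1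
    refine hU.toIsKFilter.upward _ (hU.toIsKFilter.inter _ hD1 _ hD2) _
      Set.inter_subset_left ?_
    rintro β ⟨⟨hβκ, hβC⟩, -, hββ1⟩
    have hββ1' : β1 ≤ β := not_lt.1 hββ1
    have hfc0 : c0 < f β := (hlt1 c0).trans_le (h1 β hββ1' hβκ)
    have hne : (C ∩ Set.Iio (f β)).Nonempty := ⟨c0, hc0C, hfc0⟩
    have hfβ : f β < κ.ord := hf.1 β hβκ
    have hsC : sSup (C ∩ Set.Iio (f β)) ∈ C := hmemC β hfβ hne
    have hfβC : f β ∉ C := fun h => hβC ⟨hβκ, h⟩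
    exact ⟨hβκ, lt_of_le_of_ne (hgle β) (fun h => hfβC (h ▸ hsC))⟩
/-- every countably complete uniform ultrafilter `U` on regular
uncountable `κ` is Rudin–Blass above an ultrafilter extending the club filter. -/
theorem stmt9 (κ : Cardinal.{0}) (hreg : κ.IsRegular) (hunc : Cardinal.aleph0 < κ)
    (U : Set (Set Ordinal)) (hU : IsKUltrafilter κ.ord U) (huni : Uniform κ.ord U)
    (hcc : CountablyComplete U) :
    ∃ f : Ordinal → Ordinal, FunOn κ.ord f ∧ AlmostInjMod κ.ord U f ∧
      ∀ C, IsClub κ.ord C → C ∈ PushFwd κ.ord f U := by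
  by_contra hcon
  push_neg at hcon
  -- from failure, every good function has a smaller good function mod U
  have key : ∀ f, Good κ.ord f →
      ∃ g, Good κ.ord g ∧ (Set.Iio κ.ord ∩ {β | g β < f β}) ∈ U := by
    intro f hf
    obtain ⟨C, hC, hCn⟩ := hcon f hf.1 (good_almostInj κ hreg U hU hf)
    have hnot : (Set.Iio κ.ord ∩ f ⁻¹' C) ∉ U := fun hmem => hCn ⟨hC.1, hmem⟩
    exact good_step κ hreg U hU huni hf hC hnot
  -- build an infinite descending sequence
  obtain ⟨G, hG⟩ : ∃ G : {f : Ordinal → Ordinal // Good κ.ord f} →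
      {f : Ordinal → Ordinal // Good κ.ord f},
      ∀ p, (Set.Iio κ.ord ∩ {β | (G p).1 β < p.1 β}) ∈ U :=
    ⟨fun p => ⟨(key p.1 p.2).choose, (key p.1 p.2).choose_spec.1⟩,
      fun p => (key p.1 p.2).choose_spec.2⟩
  set p0 : {f : Ordinal → Ordinal // Good κ.ord f} := ⟨id, good_id κ.ord⟩ with hp0
  have hF : ∀ n : ℕ,
      (Set.Iio κ.ord ∩ {β | (G^[n + 1] p0).1 β < (G^[n] p0).1 β}) ∈ U := by
    intro n
    rw [Function.iterate_succ_apply']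
    exact hG _
  set s : Set (Set Ordinal) :=
    Set.range (fun n : ℕ => Set.Iio κ.ord ∩ {β | (G^[n + 1] p0).1 β < (G^[n] p0).1 β})
    with hs
  have hsU : ⋂₀ s ∈ U := by
    apply hcc s ?_ (Set.countable_range _) ⟨_, 0, rfl⟩
    rintro A ⟨n, rfl⟩
    exact hF n
  have hne : (⋂₀ s).Nonempty := by
    rw [Set.nonempty_iff_ne_empty]
    intro h
    rw [h] at hsU
    exact hU.toIsKFilter.proper hsU
  obtain ⟨β, hβ⟩ := hne
  have hdec : ∀ n : ℕ, (G^[n + 1] p0).1 β < (G^[n] p0).1 β := by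
    intro n
    exact (hβ _ ⟨n, rfl⟩).2
  obtain ⟨m, ⟨n, rfl⟩, hmin⟩ := Ordinal.lt_wf.has_min
    (Set.range fun n : ℕ => (G^[n] p0).1 β) ⟨_, 0, rfl⟩
  exact hmin _ ⟨n + 1, rfl⟩ (hdec n)

end PaperFormal
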